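/- If ψ⁺ ≠ ψ⁻ and both are positive, then the unique minimizer u* of S(u) = ψ⁺·u + α·(ψ⁺+ψ⁻)·log(1 + exp(−u/α)) satisfies u* = α·log(ψ⁻/ψ⁺) ≠ 0, whereas the nonsmooth loss ψ⁺·max(u,0) + ψ⁻·max(−u,0) is minimized exactly at u = 0; i.e., the smooth approximation has a biased minimizer. -/

import Mathlib

/-- Strict tangent-line inequality for `exp x + exp (-y)` type sums at a stationary point. -/
lemma key_exp_sum (a b s t : ℝ) (ha : 0 < a) (hb : 0 < b) (hs : s ≠ t)
    (hst : a * Real.exp (a * t) = b * Real.exp (-(b * t))) :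
    Real.exp (a * t) + Real.exp (-(b * t)) < Real.exp (a * s) + Real.exp (-(b * s)) := by
  have h1 : Real.exp (a * t) * (1 + a * (s - t)) < Real.exp (a * s) := by
    have hne : a * (s - t) ≠ 0 := by
      intro h
      exact hs (by nlinarith [sub_eq_zero.mp ((mul_eq_zero.mp h).resolve_left ha.ne')])
    have := Real.add_one_lt_exp hne
    calc Real.exp (a * t) * (1 + a * (s - t))
        < Real.exp (a * t) * Real.exp (a * (s - t)) := by
          have := Real.exp_pos (a * t); nlinarith
      _ = Real.exp (a * s) := by rw [← Real.exp_add]; ring_nf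
  have h2 : Real.exp (-(b * t)) * (1 - b * (s - t)) < Real.exp (-(b * s)) := by
    have hne : -(b * (s - t)) ≠ 0 := by
      intro h
      have : b * (s - t) = 0 := by linarith [neg_eq_zero.mp h]
      exact hs (by nlinarith [sub_eq_zero.mp ((mul_eq_zero.mp this).resolve_left hb.ne')])
    have := Real.add_one_lt_exp hne
    calc Real.exp (-(b * t)) * (1 - b * (s - t))
        < Real.exp (-(b * t)) * Real.exp (-(b * (s - t))) := by
          have := Real.exp_pos (-(b * t)); nlinarith
      _ = Real.exp (-(b * s)) := by rw [← Real.exp_add]; ring_nf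
  have heq : Real.exp (a * t) * (1 + a * (s - t)) + Real.exp (-(b * t)) * (1 - b * (s - t)) =
      Real.exp (a * t) + Real.exp (-(b * t)) := by linear_combination (s - t) * hst
  linarith

/-- Rewriting the smoothed newsvendor loss as `αc · log (exp + exp)`. -/
lemma S_form (ψp ψm α u : ℝ) (hψp : 0 < ψp) (hψm : 0 < ψm) (hα : 0 < α) :
    ψp * u + α * (ψp + ψm) * Real.log (1 + Real.exp (-u / α)) =
      α * (ψp + ψm) *
        Real.log (Real.exp (ψp / (α * (ψp + ψm)) * u) +
          Real.exp (-(ψm / (α * (ψp + ψm)) * u))) := by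
  have hc : (0:ℝ) < α * (ψp + ψm) := by positivity
  have hE : Real.exp (ψp / (α * (ψp + ψm)) * u) + Real.exp (-(ψm / (α * (ψp + ψm)) * u)) =
      Real.exp (ψp / (α * (ψp + ψm)) * u) * (1 + Real.exp (-u / α)) := by
    have hx : -(ψm / (α * (ψp + ψm)) * u) = ψp / (α * (ψp + ψm)) * u + (-u / α) := by
      field_simp
      ring
    rw [hx, Real.exp_add]
    ring
  rw [hE, Real.log_mul (Real.exp_ne_zero _) (by positivity), Real.log_exp]
  field_simp

theorem smooth_minimizer_biased (ψp ψm α : ℝ)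
    (hψp : 0 < ψp) (hψm : 0 < ψm) (hne : ψp ≠ ψm) (hα : 0 < α) :
    α * Real.log (ψm / ψp) ≠ 0 ∧
    (∀ u : ℝ,
      (ψp * (α * Real.log (ψm / ψp)) +
          α * (ψp + ψm) * Real.log (1 + Real.exp (-(α * Real.log (ψm / ψp)) / α))) ≤
        ψp * u + α * (ψp + ψm) * Real.log (1 + Real.exp (-u / α))) ∧
    (∀ u : ℝ, u ≠ α * Real.log (ψm / ψp) →
      (ψp * (α * Real.log (ψm / ψp)) +
          α * (ψp + ψm) * Real.log (1 + Real.exp (-(α * Real.log (ψm / ψp)) / α))) <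
        ψp * u + α * (ψp + ψm) * Real.log (1 + Real.exp (-u / α))) ∧
    (∀ u : ℝ, ψp * max (0 : ℝ) 0 + ψm * max (-(0 : ℝ)) 0 ≤ ψp * max u 0 + ψm * max (-u) 0) ∧
    (∀ u : ℝ, u ≠ 0 →
      ψp * max (0 : ℝ) 0 + ψm * max (-(0 : ℝ)) 0 < ψp * max u 0 + ψm * max (-u) 0) := by
  have hc : (0:ℝ) < α * (ψp + ψm) := by positivity
  set L := Real.log (ψm / ψp) with hL
  set a := ψp / (α * (ψp + ψm)) with ha
  set b := ψm / (α * (ψp + ψm)) with hb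
  have hapos : 0 < a := by positivity
  have hbpos : 0 < b := by positivity
  have hLne : L ≠ 0 := by
    intro h
    rcases Real.log_eq_zero.mp h with h1 | h1 | h1
    · exact absurd h1 (div_pos hψm hψp).ne'
    · exact hne ((div_eq_one_iff_eq hψp.ne').mp h1).symm
    · nlinarith [div_pos hψm hψp]
  have hustar_ne : α * L ≠ 0 := mul_ne_zero hα.ne' hLne
  have hexpL : Real.exp L = ψm / ψp := Real.exp_log (by positivity)
  -- the stationarity condition
  have hst : a * Real.exp (a * (α * L)) = b * Real.exp (-(b * (α * L))) := by
    have h1 : Real.exp (a * (α * L)) = Real.exp L * Real.exp (-(b * (α * L))) := by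
      rw [← Real.exp_add]
      congr 1
      rw [ha, hb]
      field_simp
      ring
    rw [h1, hexpL, ha, hb]
    have hE := Real.exp_pos (-(b * (α * L)))
    field_simp
  have hstrict : ∀ u : ℝ, u ≠ α * L →
      (ψp * (α * L) + α * (ψp + ψm) * Real.log (1 + Real.exp (-(α * L) / α))) <
        ψp * u + α * (ψp + ψm) * Real.log (1 + Real.exp (-u / α)) := by
    intro u hu
    rw [S_form ψp ψm α (α * L) hψp hψm hα, S_form ψp ψm α u hψp hψm hα]
    have hkey := key_exp_sum a b u (α * L) hapos hbpos hu hst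
    have hEpos : (0:ℝ) < Real.exp (a * (α * L)) + Real.exp (-(b * (α * L))) := by positivity
    exact mul_lt_mul_of_pos_left (Real.log_lt_log hEpos hkey) hc
  refine ⟨hustar_ne, ?_, hstrict, ?_, ?_⟩
  · intro u
    by_cases hu : u = α * L
    · rw [hu]
    · exact le_of_lt (hstrict u hu)
  · intro u
    simp only [neg_zero, max_self, mul_zero, add_zero]
    have h1 : 0 ≤ ψp * max u 0 := mul_nonneg hψp.le (le_max_right u 0)
    have h2 : 0 ≤ ψm * max (-u) 0 := mul_nonneg hψm.le (le_max_right (-u) 0)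
    linarith
  · intro u hu
    simp only [neg_zero, max_self, mul_zero, add_zero]
    have h1 : 0 ≤ ψp * max u 0 := mul_nonneg hψp.le (le_max_right u 0)
    have h2 : 0 ≤ ψm * max (-u) 0 := mul_nonneg hψm.le (le_max_right (-u) 0)
    rcases lt_or_gt_of_ne hu with h | h
    · have : 0 < ψm * max (-u) 0 :=
        mul_pos hψm (lt_of_lt_of_le (by linarith) (le_max_left (-u) 0))
      linarith
    · have : 0 < ψp * max u 0 := mul_pos hψp (lt_of_lt_of_le h (le_max_left u 0))
      linarith
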